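/- The function d(p,q) = H(p) + H(q) − 2H(p ∨ q) on δ_N satisfies the triangle inequality: d(p,r) + d(r,q) ≥ d(p,q) for all p, q, r ∈ δ_N. -/

import Mathlib

open Finset

/-- Partial sum of the first `l` components of `p`. -/
def PartSum {N : ℕ} (p : Fin N → ℝ) (l : ℕ) : ℝ := ∑ i : Fin N, if (i : ℕ) < l then p i else 0

/-- `p` is a probability vector sorted in decreasing order (an element of δ_N). -/
def IsDecProb {N : ℕ} (p : Fin N → ℝ) : Prop :=
  (∀ i, 0 ≤ p i) ∧ (∀ i j : Fin N, i ≤ j → p j ≤ p i) ∧ ∑ i, p i = 1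

/-- `p ≺ q` : every partial sum of `p` is at most the corresponding partial sum of `q`. -/
def Maj {N : ℕ} (p q : Fin N → ℝ) : Prop := ∀ l : ℕ, PartSum p l ≤ PartSum q l

/-- `s` is the supremum of `p` and `q` in the majorization lattice. -/
def IsSup {N : ℕ} (s p q : Fin N → ℝ) : Prop :=
  IsDecProb s ∧ Maj p s ∧ Maj q s ∧ ∀ t, IsDecProb t → Maj p t → Maj q t → Maj s t

/-- `s` is the infimum of `p` and `q` in the majorization lattice. -/
def IsInf {N : ℕ} (s p q : Fin N → ℝ) : Prop :=
  IsDecProb s ∧ Maj s p ∧ Maj s q ∧ ∀ t, IsDecProb t → Maj t p → Maj t q → Maj t s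

/-- Shannon entropy. -/
noncomputable def H {N : ℕ} (p : Fin N → ℝ) : ℝ := -∑ i, p i * Real.log (p i)

namespace MajTri

variable {N : ℕ}

/-- extension of a `Fin N` vector to `ℕ` by zero. -/
def pe (p : Fin N → ℝ) : ℕ → ℝ := fun i => if h : i < N then p ⟨i, h⟩ else 0

lemma H_eq (p : Fin N → ℝ) : H p = ∑ i, Real.negMulLog (p i) := by
  simp [H, Real.negMulLog_eq_neg, Finset.sum_neg_distrib]

lemma partSum_zero (p : Fin N → ℝ) : PartSum p 0 = 0 := by
  simp [PartSum]

lemma partSum_succ (p : Fin N → ℝ) (l : ℕ) : PartSum p (l + 1) = PartSum p l + pe p l := by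
  have h : ∀ i : Fin N, (if (i : ℕ) < l + 1 then p i else 0)
      = (if (i : ℕ) < l then p i else 0) + (if (i : ℕ) = l then p i else 0) := by
    intro i
    by_cases h1 : (i : ℕ) < l
    · rw [if_pos (by omega), if_pos h1, if_neg (by omega), add_zero]
    · by_cases h2 : (i : ℕ) = l
      · rw [if_pos (by omega), if_neg h1, if_pos h2, zero_add]
      · rw [if_neg (by omega), if_neg h1, if_neg h2, add_zero]
  rw [PartSum, PartSum]
  rw [Finset.sum_congr rfl (fun i _ => h i), Finset.sum_add_distrib]
  congr 1
  by_cases hl : l < N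
  · rw [show pe p l = p ⟨l, hl⟩ from dif_pos hl]
    rw [Finset.sum_eq_single (⟨l, hl⟩ : Fin N)]
    · simp
    · intro b _ hb
      rw [if_neg (by simpa [Fin.ext_iff] using hb)]
    · simp
  · rw [show pe p l = 0 from dif_neg hl]
    apply Finset.sum_eq_zero
    intro i _
    rw [if_neg (by omega)]

lemma partSum_eq (p : Fin N → ℝ) (l : ℕ) : PartSum p l = ∑ i ∈ range l, pe p i := by
  induction l with
  | zero => simp [partSum_zero]
  | succ k ih => rw [partSum_succ, Finset.sum_range_succ, ih]

lemma partSum_of_ge (p : Fin N → ℝ) {l : ℕ} (h : N ≤ l) : PartSum p l = ∑ i, p i := by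
  rw [PartSum]
  exact Finset.sum_congr rfl (fun i _ => if_pos (lt_of_lt_of_le i.2 h))

lemma pe_nonneg {p : Fin N → ℝ} (hp : ∀ i, 0 ≤ p i) (i : ℕ) : 0 ≤ pe p i := by
  unfold pe; split <;> simp [hp]

lemma pe_antitone {p : Fin N → ℝ} (hp0 : ∀ i, 0 ≤ p i)
    (hp : ∀ i j : Fin N, i ≤ j → p j ≤ p i) : Antitone (pe p) := by
  intro i j hij
  unfold pe
  by_cases hj : j < N
  · rw [dif_pos hj, dif_pos (lt_of_le_of_lt hij hj)]
    exact hp _ _ (by simpa [Fin.le_def] using hij)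
  · rw [dif_neg hj]
    split
    · exact hp0 _
    · exact le_refl _

lemma partSum_mono {p : Fin N → ℝ} (hp : ∀ i, 0 ≤ p i) : Monotone (PartSum p) := by
  apply monotone_nat_of_le_succ
  intro n
  rw [partSum_succ]
  have := pe_nonneg hp n
  linarith

lemma partSum_le_total {p : Fin N → ℝ} (hp : ∀ i, 0 ≤ p i) (l : ℕ) :
    PartSum p l ≤ ∑ i, p i := by
  rcases le_total N l with h | h
  · rw [partSum_of_ge p h]
  · rw [← partSum_of_ge p (le_refl N)]
    exact partSum_mono hp h

lemma diff_partSum (p : Fin N → ℝ) (i : Fin N) :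
    p i = PartSum p ((i : ℕ) + 1) - PartSum p (i : ℕ) := by
  rw [partSum_succ]
  have : pe p (i : ℕ) = p i := by
    rw [pe, dif_pos i.2]
  rw [this]; ring

end MajTri

namespace MajTri
variable {N : ℕ}

lemma partSum_eq_one_of_zero {p : Fin N → ℝ} (hp : IsDecProb p) {i : Fin N}
    (h : p i = 0) : PartSum p (i : ℕ) = 1 := by
  obtain ⟨hp0, hps, hp1⟩ := hp
  have key : ∑ j, p j = PartSum p (i : ℕ) + ∑ j : Fin N, (if (j : ℕ) < (i : ℕ) then 0 else p j) := by
    rw [PartSum, ← Finset.sum_add_distrib]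
    apply Finset.sum_congr rfl
    intro j _
    split <;> ring
  have tail : ∑ j : Fin N, (if (j : ℕ) < (i : ℕ) then 0 else p j) = 0 := by
    apply Finset.sum_eq_zero
    intro j _
    split
    · rfl
    · have hij : i ≤ j := by omega
      have := hps i j hij
      have := hp0 j
      linarith [h ▸ this]
  rw [hp1] at key
  linarith [key, tail]

lemma zero_of_maj {p q : Fin N → ℝ} (hp : IsDecProb p) (hq : IsDecProb q)
    (h : Maj p q) {i : Fin N} (hpi : p i = 0) : q i = 0 := by
  have h1 : PartSum p (i : ℕ) = 1 := partSum_eq_one_of_zero hp hpi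
  have h2 : PartSum q (i : ℕ) = 1 := by
    have := h (i : ℕ)
    have := partSum_le_total hq.1 (i : ℕ)
    rw [hq.2.2] at this
    linarith
  have h3 : PartSum q ((i : ℕ) + 1) ≤ 1 := by
    have := partSum_le_total hq.1 ((i : ℕ) + 1)
    rw [hq.2.2] at this; exact this
  have h4 := diff_partSum q i
  have h5 := hq.1 i
  linarith

lemma tangent {a b : ℝ} (ha : 0 < a) (hb : 0 ≤ b) :
    Real.negMulLog b - Real.negMulLog a ≤ -(Real.log a + 1) * (b - a) := by
  rcases eq_or_lt_of_le hb with h | h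
  · rw [← h]
    simp [Real.negMulLog_eq_neg]
    nlinarith [ha]
  · have hlog := Real.log_le_sub_one_of_pos (div_pos ha h)
    have hd : Real.log (a / b) = Real.log a - Real.log b := Real.log_div ha.ne' h.ne'
    rw [hd] at hlog
    have hb' : b * (a / b) = a := by field_simp
    have : b * (Real.log a - Real.log b) ≤ a - b := by nlinarith [hlog, h]
    simp only [Real.negMulLog_eq_neg]
    nlinarith [this]

lemma abel_le (c D : ℕ → ℝ) (hD0 : D 0 = 0) :
    ∀ n, (∀ i < n, (c i - c (i + 1)) * D (i + 1) ≤ 0) →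
      ∑ i ∈ range n, c i * (D (i + 1) - D i) ≤ c n * D n := by
  intro n
  induction n with
  | zero => simp [hD0]
  | succ k ih =>
    intro h
    rw [Finset.sum_range_succ]
    have h1 := ih (fun i hi => h i (by omega))
    have h2 := h k (by omega)
    nlinarith [h1, h2]

lemma schur {p q : Fin N → ℝ} (hp : IsDecProb p) (hq : IsDecProb q) (h : Maj p q) :
    H q ≤ H p := by
  set c : ℕ → ℝ := fun i => -(Real.log (pe p i) + 1) with hc
  set D : ℕ → ℝ := fun l => PartSum q l - PartSum p l with hD
  have hD0 : D 0 = 0 := by simp [hD, partSum_zero]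
  have hDnn : ∀ l, 0 ≤ D l := fun l => by simp [hD]; exact h l
  have hDN : ∀ l, N ≤ l → D l = 0 := by
    intro l hl
    simp only [hD]
    rw [partSum_of_ge q hl, partSum_of_ge p hl, hp.2.2, hq.2.2]
    ring
  -- per-index tangent bound
  have key : ∀ i : Fin N, Real.negMulLog (q i) - Real.negMulLog (p i)
      ≤ c (i : ℕ) * (q i - p i) := by
    intro i
    rcases eq_or_lt_of_le (hp.1 i) with h0 | h0
    · have hq0 : q i = 0 := zero_of_maj hp hq h h0.symm
      rw [← h0, hq0]
      simp
    · have hpe : pe p (i : ℕ) = p i := dif_pos i.2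
      have := tangent h0 (hq.1 i)
      simpa [hc, hpe] using this
  -- abel hypothesis
  have habel : ∀ i < N, (c i - c (i + 1)) * D (i + 1) ≤ 0 := by
    intro i hi
    by_cases hz : D (i + 1) = 0
    · rw [hz, mul_zero]
    · have hDpos : 0 < D (i + 1) := lt_of_le_of_ne (hDnn _) (Ne.symm hz)
      have hi1 : i + 1 < N := by
        rcases Nat.lt_or_ge (i + 1) N with h' | h'
        · exact h'
        · exact absurd (hDN _ h') hz
      have hpi1 : 0 < p ⟨i + 1, hi1⟩ := by
        rcases eq_or_lt_of_le (hp.1 ⟨i + 1, hi1⟩) with h0 | h0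
        · exfalso
          have h1 : PartSum p (i + 1) = 1 := by
            have := partSum_eq_one_of_zero hp h0.symm
            simpa using this
          have h2 := partSum_le_total hq.1 (i + 1)
          rw [hq.2.2] at h2
          have : D (i + 1) ≤ 0 := by simp only [hD]; linarith
          linarith
        · exact h0
      have hii : (⟨i, by omega⟩ : Fin N) ≤ ⟨i + 1, hi1⟩ := by
        simp [Fin.le_def]
      have hple : p ⟨i + 1, hi1⟩ ≤ p ⟨i, by omega⟩ := hp.2.1 _ _ hii
      have hmono : c i ≤ c (i + 1) := by
        simp only [hc]
        have e1 : pe p i = p ⟨i, by omega⟩ := dif_pos (by omega)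
        have e2 : pe p (i + 1) = p ⟨i + 1, hi1⟩ := dif_pos hi1
        rw [e1, e2]
        have := Real.log_le_log hpi1 hple
        linarith
      nlinarith [hDpos, hmono]
  -- put together
  have main : ∑ i : Fin N, (Real.negMulLog (q i) - Real.negMulLog (p i)) ≤ 0 := by
    have step1 : ∑ i : Fin N, (Real.negMulLog (q i) - Real.negMulLog (p i))
        ≤ ∑ i : Fin N, c (i : ℕ) * (q i - p i) :=
      Finset.sum_le_sum (fun i _ => key i)
    have step2 : ∑ i : Fin N, c (i : ℕ) * (q i - p i)
        = ∑ i ∈ range N, c i * (D (i + 1) - D i) := by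
      rw [← Fin.sum_univ_eq_sum_range (fun i => c i * (D (i + 1) - D i)) N]
      apply Finset.sum_congr rfl
      intro i _
      have e1 := diff_partSum q i
      have e2 := diff_partSum p i
      have : q i - p i = D ((i : ℕ) + 1) - D (i : ℕ) := by
        simp only [hD]; linarith
      rw [this]
    have step3 := abel_le c D hD0 N habel
    rw [hDN N (le_refl N), mul_zero] at step3
    calc _ ≤ _ := step1
      _ = _ := step2
      _ ≤ 0 := step3
  rw [H_eq, H_eq]
  rw [Finset.sum_sub_distrib] at main
  linarith

end MajTri

namespace MajTri
variable {N : ℕ}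

lemma pair_concave {x y u v : ℝ} (hx : 0 ≤ x) (hy : 0 ≤ y) (hxy : x ≤ y)
    (hsum : u + v = x + y) (h1 : x ≤ u) (h2 : u ≤ y) :
    Real.negMulLog x + Real.negMulLog y ≤ Real.negMulLog u + Real.negMulLog v := by
  rcases eq_or_lt_of_le hxy with heq | hlt
  · have hu : u = x := le_antisymm (heq ▸ h2) h1
    have hv : v = y := by rw [hu] at hsum; linarith
    rw [hu, hv]
  · set t : ℝ := (u - x) / (y - x) with ht
    have hyx : 0 < y - x := by linarith
    have ht0 : 0 ≤ t := div_nonneg (by linarith) (by linarith)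
    have ht1 : t ≤ 1 := by
      rw [div_le_one hyx]; linarith
    have hu : (1 - t) * x + t * y = u := by
      rw [ht]; field_simp; ring
    have hv : t * x + (1 - t) * y = v := by
      have : u + v = x + y := hsum
      field_simp [ht]; nlinarith [this]
    have hxs : x ∈ Set.Ici (0:ℝ) := hx
    have hys : y ∈ Set.Ici (0:ℝ) := hy
    have hA := Real.concaveOn_negMulLog.2 hxs hys (by linarith : (0:ℝ) ≤ 1 - t) ht0
      (by ring)
    have hB := Real.concaveOn_negMulLog.2 hxs hys ht0 (by linarith : (0:ℝ) ≤ 1 - t)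
      (by ring)
    simp only [smul_eq_mul] at hA hB
    rw [hu] at hA
    rw [hv] at hB
    linarith

lemma pair_concave' {x y u v : ℝ} (hx : 0 ≤ x) (hy : 0 ≤ y)
    (hsum : u + v = x + y) (h1 : min x y ≤ u) (h2 : u ≤ max x y) :
    Real.negMulLog x + Real.negMulLog y ≤ Real.negMulLog u + Real.negMulLog v := by
  rcases le_total x y with hxy | hxy
  · rw [min_eq_left hxy] at h1; rw [max_eq_right hxy] at h2
    exact pair_concave hx hy hxy hsum h1 h2
  · rw [min_eq_right hxy] at h1; rw [max_eq_left hxy] at h2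
    have := pair_concave hy hx hxy (by linarith) h1 h2
    linarith

lemma le_val_of_strictMono {m : ℕ} (g : Fin m → ℕ)
    (hg : ∀ i j : Fin m, i < j → g i < g j) :
    ∀ n (j : Fin m), (j : ℕ) = n → n ≤ g j := by
  intro n
  induction n with
  | zero => intro j _; exact Nat.zero_le _
  | succ k ih =>
    intro j hj
    have hk : k < m := by omega
    have h1 : (⟨k, hk⟩ : Fin m) < j := by
      rw [Fin.lt_def]; simp; omega
    have h2 := hg _ _ h1
    have h3 := ih ⟨k, hk⟩ rfl
    omega

lemma partSum_eq_sum_fin (v : Fin N → ℝ) {m : ℕ} (hm : m ≤ N) :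
    PartSum v m = ∑ j : Fin m, v (Fin.castLE hm j) := by
  rw [partSum_eq]
  rw [← Fin.sum_univ_eq_sum_range (fun j => pe v j) m]
  apply Finset.sum_congr rfl
  intro j _
  rw [pe, dif_pos (lt_of_lt_of_le j.2 hm)]
  rfl

lemma sum_le_partSum {v : Fin N → ℝ}
    (hmono : ∀ i j : Fin N, i ≤ j → v j ≤ v i) (s : Finset (Fin N)) :
    ∑ i ∈ s, v i ≤ PartSum v s.card := by
  have hm : s.card ≤ N := by
    simpa using Finset.card_le_univ s
  set m := s.card with hmdef
  have e := s.orderIsoOfFin hmdef.symm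
  have hsum : ∑ i ∈ s, v i = ∑ j : Fin m, v ((e j) : Fin N) := by
    rw [← Finset.sum_attach s (fun i => v i)]
    exact (Equiv.sum_comp e.toEquiv (fun x : s => v (x : Fin N))).symm
  rw [hsum, partSum_eq_sum_fin v hm]
  apply Finset.sum_le_sum
  intro j _
  apply hmono
  rw [Fin.le_def]
  have := le_val_of_strictMono (fun j : Fin m => ((e j : Fin N) : ℕ))
    (fun i j hij => by
      have := e.strictMono hij
      exact Fin.lt_def.mp (by exact_mod_cast this)) (j : ℕ) j rfl
  simpa using this

lemma partSum_card_lt (v : Fin N → ℝ) (l : ℕ) :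
    PartSum v l = ∑ i ∈ Finset.univ.filter (fun i : Fin N => (i : ℕ) < l), v i := by
  rw [PartSum, Finset.sum_filter]

lemma exists_sorted (c : Fin N → ℝ) (hc : ∀ i, 0 ≤ c i) :
    ∃ c' : Fin N → ℝ, (∀ i, 0 ≤ c' i) ∧ (∀ i j : Fin N, i ≤ j → c' j ≤ c' i) ∧
      (∑ i, c' i = ∑ i, c i) ∧ (H c' = H c) ∧ ∀ l, PartSum c l ≤ PartSum c' l := by
  set σ := Tuple.sort (fun i => -c i) with hσ
  refine ⟨fun i => c (σ i), fun i => hc _, ?_, ?_, ?_, ?_⟩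
  · intro i j hij
    have := Tuple.monotone_sort (fun i => -c i) hij
    simpa using this
  · exact Equiv.sum_comp σ c
  · rw [H_eq, H_eq]
    exact Equiv.sum_comp σ (fun i => Real.negMulLog (c i))
  · intro l
    set c' : Fin N → ℝ := fun i => c (σ i) with hc'
    have hmono : ∀ i j : Fin N, i ≤ j → c' j ≤ c' i := by
      intro i j hij
      have := Tuple.monotone_sort (fun i => -c i) hij
      simpa [hc'] using this
    rw [partSum_card_lt c l]
    set s := Finset.univ.filter (fun i : Fin N => (i : ℕ) < l) with hs
    have himg : ∑ i ∈ s, c i = ∑ i ∈ s.map σ.symm.toEmbedding, c' i := by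
      rw [Finset.sum_map]
      apply Finset.sum_congr rfl
      intro i _
      simp [hc']
    rw [himg]
    have hb := sum_le_partSum hmono (s.map σ.symm.toEmbedding)
    rw [Finset.card_map] at hb
    refine le_trans hb ?_
    apply partSum_mono (fun i => hc _)
    have hcard : s.card ≤ (Finset.range l).card :=
      Finset.card_le_card_of_injOn (fun i : Fin N => (i : ℕ))
        (by intro i hi
            simp [hs] at hi
            simp [hi])
        (by intro a _ b _ hab
            exact Fin.ext hab)
    rw [Finset.card_range] at hcard
    exact hcard

lemma min_concave_step {A B : ℕ → ℝ}
    (hA : ∀ n, A (n + 2) - A (n + 1) ≤ A (n + 1) - A n)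
    (hB : ∀ n, B (n + 2) - B (n + 1) ≤ B (n + 1) - B n) (n : ℕ) :
    min (A (n + 2)) (B (n + 2)) - min (A (n + 1)) (B (n + 1))
      ≤ min (A (n + 1)) (B (n + 1)) - min (A n) (B n) := by
  rcases le_total (A (n + 1)) (B (n + 1)) with h | h
  · rw [min_eq_left h]
    have h1 : min (A (n + 2)) (B (n + 2)) ≤ A (n + 2) := min_le_left _ _
    have h2 : min (A n) (B n) ≤ A n := min_le_left _ _
    have := hA n
    linarith
  · rw [min_eq_right h]
    have h1 : min (A (n + 2)) (B (n + 2)) ≤ B (n + 2) := min_le_right _ _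
    have h2 : min (A n) (B n) ≤ B n := min_le_right _ _
    have := hB n
    linarith

lemma partSum_telescope {g : ℕ → ℝ} (b : Fin N → ℝ)
    (hb : ∀ i : Fin N, b i = g ((i : ℕ) + 1) - g (i : ℕ)) (hg0 : g 0 = 0) :
    ∀ l, l ≤ N → PartSum b l = g l := by
  intro l
  induction l with
  | zero => intro _; rw [partSum_zero, hg0]
  | succ k ih =>
    intro hk
    have hkN : k < N := by omega
    rw [partSum_succ, ih (by omega)]
    have : pe b k = b ⟨k, hkN⟩ := dif_pos hkN
    rw [this, hb ⟨k, hkN⟩]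
    simp

end MajTri

open MajTri

/-- Triangle inequality for d(p,q) = H(p) + H(q) − 2H(p ∨ q):
d(p,r) + d(r,q) ≥ d(p,q). -/
theorem maj_dist_triangle {N : ℕ} (p q r spq spr srq : Fin N → ℝ)
    (hp : IsDecProb p) (hq : IsDecProb q) (hr : IsDecProb r)
    (hspq : IsSup spq p q) (hspr : IsSup spr p r) (hsrq : IsSup srq r q) :
    (H p + H r - 2 * H spr) + (H r + H q - 2 * H srq) ≥ H p + H q - 2 * H spq := by
  classical
  set A : ℕ → ℝ := fun l => PartSum spr l with hA
  set B : ℕ → ℝ := fun l => PartSum srq l with hB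
  have hA0 : A 0 = 0 := partSum_zero spr
  have hB0 : B 0 = 0 := partSum_zero srq
  have hAmono : Monotone A := partSum_mono hspr.1.1
  have hBmono : Monotone B := partSum_mono hsrq.1.1
  have hAdiff : ∀ n, A (n + 1) = A n + pe spr n := fun n => partSum_succ spr n
  have hBdiff : ∀ n, B (n + 1) = B n + pe srq n := fun n => partSum_succ srq n
  have hAconc : ∀ n, A (n + 2) - A (n + 1) ≤ A (n + 1) - A n := by
    intro n
    rw [hAdiff (n+1), hAdiff n]
    have := pe_antitone hspr.1.1 hspr.1.2.1 (show n ≤ n + 1 by omega)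
    simpa using this
  have hBconc : ∀ n, B (n + 2) - B (n + 1) ≤ B (n + 1) - B n := by
    intro n
    rw [hBdiff (n+1), hBdiff n]
    have := pe_antitone hsrq.1.1 hsrq.1.2.1 (show n ≤ n + 1 by omega)
    simpa using this
  have hAN : ∀ l, N ≤ l → A l = 1 := by
    intro l hl
    show PartSum spr l = 1
    rw [partSum_of_ge spr hl, hspr.1.2.2]
  have hBN : ∀ l, N ≤ l → B l = 1 := by
    intro l hl
    show PartSum srq l = 1
    rw [partSum_of_ge srq hl, hsrq.1.2.2]
  set b : Fin N → ℝ := fun i =>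
    min (A ((i : ℕ) + 1)) (B ((i : ℕ) + 1)) - min (A (i : ℕ)) (B (i : ℕ)) with hbdef
  set c : Fin N → ℝ := fun i =>
    max (A ((i : ℕ) + 1)) (B ((i : ℕ) + 1)) - max (A (i : ℕ)) (B (i : ℕ)) with hcdef
  have hPb : ∀ l, PartSum b l = min (A l) (B l) := by
    have htel := partSum_telescope (g := fun l => min (A l) (B l)) b
      (fun i => rfl) (by rw [hA0, hB0]; simp)
    intro l
    rcases le_or_gt l N with hl | hl
    · exact htel l hl
    · rw [partSum_of_ge b (le_of_lt hl), ← partSum_of_ge b (le_refl N), htel N (le_refl N)]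
      rw [hAN N (le_refl N), hBN N (le_refl N), hAN l (le_of_lt hl), hBN l (le_of_lt hl)]
  have hPc : ∀ l, PartSum c l = max (A l) (B l) := by
    have htel := partSum_telescope (g := fun l => max (A l) (B l)) c
      (fun i => rfl) (by rw [hA0, hB0]; simp)
    intro l
    rcases le_or_gt l N with hl | hl
    · exact htel l hl
    · rw [partSum_of_ge c (le_of_lt hl), ← partSum_of_ge c (le_refl N), htel N (le_refl N)]
      rw [hAN N (le_refl N), hBN N (le_refl N), hAN l (le_of_lt hl), hBN l (le_of_lt hl)]
  -- b is a decreasing probability vector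
  have hbnn : ∀ i, 0 ≤ b i := by
    intro i
    have h1 : min (A (i : ℕ)) (B (i : ℕ)) ≤ min (A ((i : ℕ) + 1)) (B ((i : ℕ) + 1)) :=
      le_min (le_trans (min_le_left _ _) (hAmono (by omega)))
        (le_trans (min_le_right _ _) (hBmono (by omega)))
    simp only [hbdef]
    linarith
  have hbsorted : ∀ i j : Fin N, i ≤ j → b j ≤ b i := by
    intro i j hij
    have hanti : Antitone (fun n => min (A (n + 1)) (B (n + 1)) - min (A n) (B n)) :=
      antitone_nat_of_succ_le (fun n => min_concave_step hAconc hBconc n)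
    exact hanti (show (i : ℕ) ≤ (j : ℕ) from hij)
  have hbsum : ∑ i, b i = 1 := by
    rw [← partSum_of_ge b (le_refl N), hPb N, hAN N (le_refl N), hBN N (le_refl N)]
    simp
  have hbD : IsDecProb b := ⟨hbnn, hbsorted, hbsum⟩
  have hmajrb : Maj r b := by
    intro l
    rw [hPb l]
    exact le_min (hspr.2.2.1 l) (hsrq.2.1 l)
  have hHb : H b ≤ H r := schur hr hbD hmajrb
  -- c facts
  have hcnn : ∀ i, 0 ≤ c i := by
    intro i
    have h1 : max (A (i : ℕ)) (B (i : ℕ)) ≤ max (A ((i : ℕ) + 1)) (B ((i : ℕ) + 1)) :=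
      max_le (le_trans (hAmono (by omega)) (le_max_left _ _))
        (le_trans (hBmono (by omega)) (le_max_right _ _))
    simp only [hcdef]
    linarith
  have hcsum : ∑ i, c i = 1 := by
    rw [← partSum_of_ge c (le_refl N), hPc N, hAN N (le_refl N), hBN N (le_refl N)]
    simp
  obtain ⟨c', hc'nn, hc'sorted, hc'sum, hc'H, hc'ps⟩ := exists_sorted c hcnn
  have hc'D : IsDecProb c' := ⟨hc'nn, hc'sorted, by rw [hc'sum, hcsum]⟩
  have hmajpc' : Maj p c' := by
    intro l
    calc PartSum p l ≤ A l := hspr.2.1 l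
      _ ≤ max (A l) (B l) := le_max_left _ _
      _ = PartSum c l := (hPc l).symm
      _ ≤ PartSum c' l := hc'ps l
  have hmajqc' : Maj q c' := by
    intro l
    calc PartSum q l ≤ B l := hsrq.2.2.1 l
      _ ≤ max (A l) (B l) := le_max_right _ _
      _ = PartSum c l := (hPc l).symm
      _ ≤ PartSum c' l := hc'ps l
  have hmajsc' : Maj spq c' := hspq.2.2.2 c' hc'D hmajpc' hmajqc'
  have hHc' : H c' ≤ H spq := schur hspq.1 hc'D hmajsc'
  -- per-index supermodularity
  have hsuper : H spr + H srq ≤ H b + H c := by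
    rw [H_eq spr, H_eq srq, H_eq b, H_eq c, ← Finset.sum_add_distrib,
      ← Finset.sum_add_distrib]
    apply Finset.sum_le_sum
    intro i _
    have hx := diff_partSum spr i
    have hy := diff_partSum srq i
    have hxA : spr i = A ((i : ℕ) + 1) - A (i : ℕ) := hx
    have hyB : srq i = B ((i : ℕ) + 1) - B (i : ℕ) := hy
    have hsum : b i + c i = spr i + srq i := by
      have h1 := min_add_max (A ((i : ℕ) + 1)) (B ((i : ℕ) + 1))
      have h2 := min_add_max (A (i : ℕ)) (B (i : ℕ))
      simp only [hbdef, hcdef]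
      rw [hxA, hyB]
      linarith
    have h1 : min (spr i) (srq i) ≤ b i := by
      rcases le_total (A ((i : ℕ) + 1)) (B ((i : ℕ) + 1)) with h | h
      · have heq : min (A ((i : ℕ) + 1)) (B ((i : ℕ) + 1)) = A ((i : ℕ) + 1) := min_eq_left h
        have hm := min_le_left (A (i : ℕ)) (B (i : ℕ))
        have hmx := min_le_left (spr i) (srq i)
        simp only [hbdef]
        rw [heq]
        linarith [hxA]
      · have heq : min (A ((i : ℕ) + 1)) (B ((i : ℕ) + 1)) = B ((i : ℕ) + 1) := min_eq_right h
        have hm := min_le_right (A (i : ℕ)) (B (i : ℕ))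
        have hmx := min_le_right (spr i) (srq i)
        simp only [hbdef]
        rw [heq]
        linarith [hyB]
    have h2 : b i ≤ max (spr i) (srq i) := by
      rcases le_total (A (i : ℕ)) (B (i : ℕ)) with h | h
      · have heq : min (A (i : ℕ)) (B (i : ℕ)) = A (i : ℕ) := min_eq_left h
        have hm := min_le_left (A ((i : ℕ) + 1)) (B ((i : ℕ) + 1))
        have hmx := le_max_left (spr i) (srq i)
        simp only [hbdef]
        rw [heq]
        linarith [hxA]
      · have heq : min (A (i : ℕ)) (B (i : ℕ)) = B (i : ℕ) := min_eq_right h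
        have hm := min_le_right (A ((i : ℕ) + 1)) (B ((i : ℕ) + 1))
        have hmx := le_max_right (spr i) (srq i)
        simp only [hbdef]
        rw [heq]
        linarith [hyB]
    exact pair_concave' (hspr.1.1 i) (hsrq.1.1 i) hsum h1 h2
  have hfinal : H spr + H srq ≤ H r + H spq := by
    rw [hc'H] at hHc'
    linarith
  linarith
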